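/- Let K > N ≥ 1 be integers. Let R_c : [0,1) → ℝ be continuous, strictly decreasing and strictly positive, and let R_k : [0,1) → ℝ be continuous, strictly increasing with R_k(0) = 0. If (β*, t*) ∈ [0, 1/N) × [0, 1) maximizes the function (β, t) ↦ min( β·R_c(t) + R_k(t), ((1 − N·β)/(K − N))·R_c(t) ) over [0, 1/N) × [0, 1), then ((1 − N·β*)/(K − N))·R_c(t*) = β*·R_c(t*) + R_k(t*). -/

import Mathlib

open Topology Filter


/-- Proposition 5: any maximizer of the max-min fair rate allocation problem for RSMA with
ZF precoding equalizes the two rate expressions. -/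
theorem stmt_0 (K N : ℕ) (hN : 1 ≤ N) (hKN : N < K)
    (Rc Rk : ℝ → ℝ)
    (hRc_cont : ContinuousOn Rc (Set.Ico 0 1))
    (hRc_anti : StrictAntiOn Rc (Set.Ico 0 1))
    (hRc_pos : ∀ t ∈ Set.Ico (0:ℝ) 1, 0 < Rc t)
    (hRk_cont : ContinuousOn Rk (Set.Ico 0 1))
    (hRk_mono : StrictMonoOn Rk (Set.Ico 0 1))
    (hRk0 : Rk 0 = 0)
    (βs ts : ℝ)
    (hβs : βs ∈ Set.Ico (0:ℝ) (1 / (N:ℝ))) (hts : ts ∈ Set.Ico (0:ℝ) 1)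
    (hmax : ∀ β ∈ Set.Ico (0:ℝ) (1 / (N:ℝ)), ∀ t ∈ Set.Ico (0:ℝ) 1,
      min (β * Rc t + Rk t) ((1 - (N:ℝ) * β) / ((K:ℝ) - (N:ℝ)) * Rc t) ≤
        min (βs * Rc ts + Rk ts) ((1 - (N:ℝ) * βs) / ((K:ℝ) - (N:ℝ)) * Rc ts)) :
    (1 - (N:ℝ) * βs) / ((K:ℝ) - (N:ℝ)) * Rc ts = βs * Rc ts + Rk ts := by
  have hN' : (1:ℝ) ≤ (N:ℝ) := by exact_mod_cast hN
  have hNpos : (0:ℝ) < (N:ℝ) := by linarith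
  have hd : (0:ℝ) < (K:ℝ) - (N:ℝ) := by
    have : (N:ℝ) < (K:ℝ) := by exact_mod_cast hKN
    linarith
  have ha : 0 < Rc ts := hRc_pos ts hts
  set c : ℝ := (N:ℝ) with hc
  set d : ℝ := (K:ℝ) - (N:ℝ) with hdd
  set a : ℝ := Rc ts with haa
  set f : ℝ := βs * a + Rk ts with hf
  set g : ℝ := (1 - c * βs) / d * a with hg
  by_contra hne
  rcases lt_trichotomy f g with h1 | h2 | h3
  · -- f < g : increase β
    have hmin : min f g = f := min_eq_left h1.le
    have hε1 : (0:ℝ) < (1/c - βs)/2 := by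
      have := hβs.2; simp only [hc] at *; linarith
    have hε2 : (0:ℝ) < (g - f) * d / (2 * c * a) :=
      div_pos (mul_pos (by linarith) hd) (by positivity)
    set ε : ℝ := min ((1/c - βs)/2) ((g - f) * d / (2 * c * a)) with hε
    have hεpos : 0 < ε := lt_min hε1 hε2
    have hβmem : βs + ε ∈ Set.Ico (0:ℝ) (1/c) := by
      constructor
      · have := hβs.1; linarith
      · have h := min_le_left ((1/c - βs)/2) ((g - f) * d / (2 * c * a))
        have : ε ≤ (1/c - βs)/2 := h
        have := hβs.2; simp only [hc] at *; linarith
    have key := hmax (βs + ε) hβmem ts hts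
    rw [hmin] at key
    have hf' : (βs + ε) * a + Rk ts = f + ε * a := by ring
    have hg' : (1 - c * (βs + ε)) / d * a = g - ε * c * a / d := by
      rw [hg]; field_simp; ring
    have h1' : f < f + ε * a := by nlinarith
    have h2' : f < g - ε * c * a / d := by
      have h : ε ≤ (g - f) * d / (2 * c * a) := min_le_right _ _
      have h' : ε * (2 * c * a) ≤ (g - f) * d := by
        rw [← le_div_iff₀ (by positivity)]; exact h
      have hle : ε * c * a / d ≤ (g - f) / 2 := by
        rw [div_le_div_iff₀ hd (by norm_num : (0:ℝ) < 2)]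
        nlinarith
      linarith
    rw [hf', hg'] at key
    have : f < min (f + ε * a) (g - ε * c * a / d) := lt_min h1' h2'
    linarith
  · exact hne h2.symm
  · -- g < f
    have hmin : min f g = g := min_eq_right h3.le
    rcases eq_or_lt_of_le hβs.1 with hβ0 | hβpos
    · -- βs = 0 : decrease t
      have hβ0 : βs = 0 := hβ0.symm
      have hgpos : 0 < g := by
        rw [hg, hβ0, mul_zero, sub_zero]; positivity
      have hgf : g < Rk ts := by
        rw [hf, hβ0, zero_mul, zero_add] at h3; exact h3
      have hRkpos : 0 < Rk ts := lt_trans hgpos hgf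
      have hts0 : 0 < ts := by
        rcases eq_or_lt_of_le hts.1 with h | h
        · exfalso; rw [← h, hRk0] at hRkpos; exact lt_irrefl _ hRkpos
        · exact h
      have hsub : Set.Ioo (0:ℝ) ts ⊆ Set.Ico 0 1 := fun x hx =>
        ⟨hx.1.le, lt_trans hx.2 hts.2⟩
      have hle : 𝓝[Set.Ioo (0:ℝ) ts] ts ≤ 𝓝[Set.Ico (0:ℝ) 1] ts :=
        nhdsWithin_mono _ hsub
      have htend : Filter.Tendsto Rk (𝓝[Set.Ioo (0:ℝ) ts] ts) (𝓝 (Rk ts)) :=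
        ((hRk_cont ts hts).mono_left hle)
      have hev : ∀ᶠ t in 𝓝[Set.Ioo (0:ℝ) ts] ts, g < Rk t :=
        htend.eventually (eventually_gt_nhds hgf)
      have hmem : ∀ᶠ t in 𝓝[Set.Ioo (0:ℝ) ts] ts, t ∈ Set.Ioo (0:ℝ) ts :=
        eventually_mem_nhdsWithin
      have : Filter.NeBot (𝓝[Set.Ioo (0:ℝ) ts] ts) := right_nhdsWithin_Ioo_neBot hts0
      obtain ⟨t', ht'g, ht'mem⟩ := (hev.and hmem).exists
      have ht'Ico : t' ∈ Set.Ico (0:ℝ) 1 := hsub ht'mem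
      have h0mem : (0:ℝ) ∈ Set.Ico (0:ℝ) (1/c) := ⟨le_refl _, by positivity⟩
      have key := hmax 0 h0mem t' ht'Ico
      rw [hmin] at key
      have hRc' : a < Rc t' := hRc_anti ht'Ico hts ht'mem.2
      have hB : g < (1 - c * 0) / d * Rc t' := by
        rw [hg, hβ0, mul_zero, sub_zero]
        exact mul_lt_mul_of_pos_left hRc' (by positivity)
      have hA : g < 0 * Rc t' + Rk t' := by
        rw [zero_mul, zero_add]; exact ht'g
      have : g < min (0 * Rc t' + Rk t') ((1 - c * 0) / d * Rc t') := lt_min hA hB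
      linarith
    · -- βs > 0 : decrease β
      have hε1 : (0:ℝ) < βs / 2 := by linarith
      have hε2 : (0:ℝ) < (f - g) / (2 * a) := div_pos (by linarith) (by positivity)
      set ε : ℝ := min (βs / 2) ((f - g) / (2 * a)) with hε
      have hεpos : 0 < ε := lt_min hε1 hε2
      have hβmem : βs - ε ∈ Set.Ico (0:ℝ) (1/c) := by
        constructor
        · have : ε ≤ βs / 2 := min_le_left _ _
          linarith
        · have := hβs.2; simp only [hc] at *; linarith
      have key := hmax (βs - ε) hβmem ts hts
      rw [hmin] at key
      have hf' : (βs - ε) * a + Rk ts = f - ε * a := by ring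
      have hg' : (1 - c * (βs - ε)) / d * a = g + ε * c * a / d := by
        rw [hg]; field_simp; ring
      have h1' : g < f - ε * a := by
        have h : ε ≤ (f - g) / (2 * a) := min_le_right _ _
        have h' : ε * (2 * a) ≤ f - g := by
          rw [← le_div_iff₀ (by positivity)]; exact h
        nlinarith
      have h2' : g < g + ε * c * a / d := by
        have : 0 < ε * c * a / d := by positivity
        linarith
      rw [hf', hg'] at key
      have : g < min (f - ε * a) (g + ε * c * a / d) := lt_min h1' h2'
      linarith
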